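/- Let W be a weak equivalence set on a finite lattice P. Then AF(W), the set of transfer systems occurring as acyclic fibrations of model structures with weak equivalences W, is exactly the interval [AF_min, AF_max] = { T ∈ Tr(P) : AF_min ⊆ T ⊆ AF_max } in the lattice of transfer systems, where AF_min is the intersection of all elements of AF(W) and AF_max is their join. -/

import Mathlib

variable {P : Type*}

section Defs
variable [Lattice P]

/-- A wide subcategory of the poset category of `P`: contains all identities,
refines `≤`, and is closed under composition. -/
def IsWide (R : P → P → Prop) : Prop :=
  (∀ x, R x x) ∧ (∀ x y, R x y → x ≤ y) ∧ (∀ x y z, R x y → R y z → R x z)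

/-- A decomposable subcategory: if a composite is in `R`, so are both factors. -/
def IsDecomposable (R : P → P → Prop) : Prop :=
  ∀ x y z : P, x ≤ y → y ≤ z → R x z → R x y ∧ R y z

/-- A transfer system: a partial order refining `≤`, closed under restriction
(pullback) along meets. -/
def IsTransferSystem (R : P → P → Prop) : Prop :=
  (∀ x, R x x) ∧ (∀ x y z, R x y → R y z → R x z) ∧
  (∀ x y, R x y → R y x → x = y) ∧
  (∀ x y, R x y → x ≤ y) ∧
  (∀ x y z, R x y → z ≤ y → R (x ⊓ z) z)

/-- A cotransfer system: a partial order refining `≤`, closed under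
cobase change (pushout) along joins. -/
def IsCotransferSystem (R : P → P → Prop) : Prop :=
  (∀ x, R x x) ∧ (∀ x y z, R x y → R y z → R x z) ∧
  (∀ x y, R x y → R y x → x = y) ∧
  (∀ x y, R x y → x ≤ y) ∧
  (∀ x y z, R x y → x ≤ z → R z (y ⊔ z))

/-- Closed under pullbacks: the pullback of `b → d` along `c → d` is `b ⊓ c → c`. -/
def PullbackClosed (R : P → P → Prop) : Prop :=
  ∀ b c d : P, R b d → c ≤ d → R (b ⊓ c) c

/-- Closed under pushouts: the pushout of `a → b` along `a → c` is `c → b ⊔ c`. -/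
def PushoutClosed (R : P → P → Prop) : Prop :=
  ∀ a b c : P, R a b → a ≤ c → R c (b ⊔ c)

/-- The left lifting class of a class `S` of morphisms of the poset category:
pairs `(a,b)` with `a ≤ b` having the left lifting property against every
member of `S`. -/
def LLP (S : P → P → Prop) (a b : P) : Prop :=
  a ≤ b ∧ ∀ x y, S x y → a ≤ x → b ≤ y → b ≤ x

/-- The right lifting class of a class `S` of morphisms of the poset category. -/
def RLP (S : P → P → Prop) (x y : P) : Prop :=
  x ≤ y ∧ ∀ a b, S a b → a ≤ x → b ≤ y → b ≤ x

/-- A weak factorization system `(L, R)`: every morphism factors as a map in `L`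
followed by a map in `R`, and `L = ᵇR`, `R = Lᵇ`. -/
def IsWFS (L R : P → P → Prop) : Prop :=
  (∀ x y : P, x ≤ y → ∃ z, L x z ∧ R z y) ∧
  (∀ a b, L a b ↔ LLP R a b) ∧
  (∀ x y, R x y ↔ RLP L x y)

/-- The composite class `S ∘ T` (first `T`, then `S`). -/
def Comp (S T : P → P → Prop) (x z : P) : Prop :=
  ∃ y, T x y ∧ S y z

/-- The two-out-of-three property for a class of morphisms. -/
def TwoOutOfThree (W : P → P → Prop) : Prop :=
  ∀ x y z : P, x ≤ y → y ≤ z →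
    ((W x y → W y z → W x z) ∧ (W x y → W x z → W y z) ∧ (W y z → W x z → W x y))

/-- A model structure on the poset category of `P`, given by acyclic
cofibrations, fibrations, cofibrations and acyclic fibrations: two weak
factorization systems `(AC, F)` and `(C, AF)` with `AC ⊆ C`, such that
`W := AF ∘ AC` satisfies two-out-of-three. -/
def IsModel (AC F C AF : P → P → Prop) : Prop :=
  IsWFS AC F ∧ IsWFS C AF ∧ (∀ x y, AC x y → C x y) ∧
  TwoOutOfThree (Comp AF AC)

/-- `T` occurs as the class of acyclic fibrations of a model structure whose
class of weak equivalences is `W`. -/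
def OccursAsAF (W T : P → P → Prop) : Prop :=
  ∃ AC F C, IsModel AC F C T ∧ ∀ x y, Comp T AC x y ↔ W x y

end Defs

section Aux
variable [Lattice P]
variable {S T L W : P → P → Prop} {a b c x y z : P}

lemma llp_refl (S : P → P → Prop) (x : P) : LLP S x x :=
  ⟨le_rfl, fun _ _ _ hxu _ => hxu⟩

lemma rlp_refl (S : P → P → Prop) (x : P) : RLP S x x :=
  ⟨le_rfl, fun _ _ _ _ hbx => hbx⟩

lemma llp_trans (h1 : LLP S a b) (h2 : LLP S b c) : LLP S a c :=
  ⟨h1.1.trans h2.1, fun u v hS hau hcv =>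
    h2.2 u v hS (h1.2 u v hS hau (h2.1.trans hcv)) hcv⟩

lemma llp_pushout (h : LLP S a b) (hac : a ≤ c) : LLP S c (b ⊔ c) :=
  ⟨le_sup_right, fun u v hS hcu hv =>
    sup_le (h.2 u v hS (hac.trans hcu) (le_sup_left.trans hv)) hcu⟩

lemma rlp_pullback (h : RLP S x y) (hc : c ≤ y) : RLP S (x ⊓ c) c :=
  ⟨inf_le_right, fun a b hab ha hb =>
    le_inf (h.2 a b hab (ha.trans inf_le_left) (hb.trans hc)) hb⟩

/-- Every transfer system is the right class of a weak factorization system. -/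
theorem ts_wfs [Fintype P] (hT : IsTransferSystem T) : IsWFS (LLP T) T := by
  obtain ⟨hrefl, htrans, _hanti, hle, hpb⟩ := hT
  have hfact : ∀ x z : P, x ≤ z → ∃ y, LLP T x y ∧ T y z := by
    intro x z hxz
    set M : Set P := {m | x ≤ m ∧ m ≤ z ∧ T m z} with hM
    have hzM : z ∈ M := ⟨hxz, le_rfl, hrefl z⟩
    obtain ⟨y, hyM, hymin⟩ :=
      Set.Finite.exists_minimalFor id M (Set.toFinite M) ⟨z, hzM⟩
    have hmin : ∀ m ∈ M, y ≤ m := by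
      intro m hm
      have hmem : y ⊓ m ∈ M := by
        refine ⟨le_inf hyM.1 hm.1, inf_le_left.trans hyM.2.1, ?_⟩
        exact htrans _ _ _ (by
          have := hpb y z m hyM.2.2 hm.2.1
          simpa using this) hm.2.2
      have := hymin hmem (by simpa using inf_le_left)
      simp only [id] at this
      exact this.trans inf_le_right
    refine ⟨y, ⟨hyM.1, ?_⟩, hyM.2.2⟩
    intro u v hS hxu hyv
    have h1 : T (u ⊓ y) y := hpb u v y hS hyv
    have h2 : T (u ⊓ y) z := htrans _ _ _ h1 hyM.2.2
    have hmem : u ⊓ y ∈ M := ⟨le_inf hxu hyM.1, inf_le_right.trans hyM.2.1, h2⟩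
    exact (hmin _ hmem).trans inf_le_left
  refine ⟨hfact, fun _ _ => Iff.rfl, fun x y => ⟨fun h => ?_, fun h => ?_⟩⟩
  · exact ⟨hle _ _ h, fun a b hab hax hby => hab.2 x y h hax hby⟩
  · obtain ⟨m, hL, hR⟩ := hfact x y h.1
    have hmx : m ≤ x := h.2 x m hL le_rfl (hle _ _ hR)
    have : x = m := le_antisymm hL.1 hmx
    rwa [this]

/-- Every cotransfer system is the left class of a weak factorization system. -/
theorem cts_wfs [Fintype P] (hL : IsCotransferSystem L) : IsWFS L (RLP L) := by
  obtain ⟨hrefl, htrans, _hanti, hle, hpo⟩ := hL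
  have hfact : ∀ x z : P, x ≤ z → ∃ y, L x y ∧ RLP L y z := by
    intro x z hxz
    set M : Set P := {m | x ≤ m ∧ m ≤ z ∧ L x m} with hM
    have hxM : x ∈ M := ⟨le_rfl, hxz, hrefl x⟩
    obtain ⟨y, hyM, hymax⟩ :=
      Set.Finite.exists_maximalFor id M (Set.toFinite M) ⟨x, hxM⟩
    have hmax : ∀ m ∈ M, m ≤ y := by
      intro m hm
      have hmem : m ⊔ y ∈ M := by
        refine ⟨hm.1.trans le_sup_left, sup_le hm.2.1 hyM.2.1, ?_⟩
        exact htrans _ _ _ hyM.2.2 (by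
          have := hpo x m y hm.2.2 hyM.1
          simpa [sup_comm] using this)
      have := hymax hmem (by simpa using le_sup_right)
      simp only [id] at this
      exact le_sup_left.trans this
    refine ⟨y, hyM.2.2, hyM.2.1, ?_⟩
    intro a b hab hay hbz
    have h1 : L y (b ⊔ y) := hpo a b y hab hay
    have h2 : L x (b ⊔ y) := htrans _ _ _ hyM.2.2 h1
    have hmem : b ⊔ y ∈ M := ⟨hyM.1.trans le_sup_right, sup_le hbz hyM.2.1, h2⟩
    exact le_sup_left.trans (hmax _ hmem)
  refine ⟨hfact, fun a b => ⟨fun h => ?_, fun h => ?_⟩, fun _ _ => Iff.rfl⟩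
  · exact ⟨hle _ _ h, fun u v huv hau hbv => huv.2 a b h hau hbv⟩
  · obtain ⟨m, hLm, hRm⟩ := hfact a b h.1
    have hbm : b ≤ m := h.2 m b hRm (hle _ _ hLm) le_rfl
    have : m = b := le_antisymm hRm.1 hbm
    rwa [← this]

end Aux

section Occ
variable [Lattice P] {S W : P → P → Prop}

/-- The one-step relation used to generate the maximal acyclic cofibration class. -/
def StepW (W : P → P → Prop) : P → P → Prop :=
  fun u v => W u v ∧ ∃ S, OccursAsAF W S ∧ LLP S u v

/-- The union of all occurring acyclic fibration classes. -/
def OccUnion (W : P → P → Prop) : P → P → Prop :=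
  fun u v => ∃ S, OccursAsAF W S ∧ S u v

lemma occ_subW (hS : OccursAsAF W S) : ∀ x y, S x y → W x y := by
  obtain ⟨AC, F, C, ⟨hwfs1, _hwfs2, _, _⟩, hW⟩ := hS
  intro x y h
  exact (hW x y).mp ⟨x, (hwfs1.2.1 x x).mpr (llp_refl _ x), h⟩

lemma occ_factor (hS : OccursAsAF W S) {x z : P} (h : x ≤ z) :
    ∃ u, LLP S x u ∧ u ≤ z ∧ S u z := by
  obtain ⟨AC, F, C, ⟨_hwfs1, hwfs2, _, _⟩, _hW⟩ := hS
  obtain ⟨u, hC, hSu⟩ := hwfs2.1 x z h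
  exact ⟨u, (hwfs2.2.1 x u).mp hC, ((hwfs2.2.2 u z).mp hSu).1, hSu⟩

lemma occ_pullback (hS : OccursAsAF W S) {x y z : P} (h : S x y) (hz : z ≤ y) :
    S (x ⊓ z) z := by
  obtain ⟨AC, F, C, ⟨_hwfs1, hwfs2, _, _⟩, _hW⟩ := hS
  exact (hwfs2.2.2 _ _).mpr (rlp_pullback ((hwfs2.2.2 x y).mp h) hz)

lemma occ_pushW (hS : OccursAsAF W S) {u v c : P} (hL : LLP S u v) (hw : W u v)
    (huc : u ≤ c) : W c (v ⊔ c) := by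
  obtain ⟨AC, F, C, ⟨hwfs1, hwfs2, _hsub, _⟩, hW⟩ := hS
  obtain ⟨m, hACm, hSm⟩ := (hW u v).mpr hw
  have hvm : v ≤ m := hL.2 m v hSm ((hwfs1.2.1 u m).mp hACm).1 le_rfl
  have hmv : m ≤ v := ((hwfs2.2.2 m v).mp hSm).1
  have hACuv : AC u v := by rw [le_antisymm hmv hvm] at hACm; exact hACm
  have hACpush : AC c (v ⊔ c) :=
    (hwfs1.2.1 _ _).mpr (llp_pushout ((hwfs1.2.1 u v).mp hACuv) huc)
  have hSrefl : S (v ⊔ c) (v ⊔ c) := (hwfs2.2.2 _ _).mpr (rlp_refl _ _)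
  exact (hW _ _).mp ⟨v ⊔ c, hACpush, hSrefl⟩

end Occ

/-- For a weak equivalence set `W`, `AF(W)` is exactly the interval
`[AF_min, AF_max]` in the lattice of transfer systems, where `AF_min` is the
intersection of all elements of `AF(W)` and `AF_max` is their join. -/
theorem afW_eq_interval [Lattice P] [Fintype P]
    (W AFmax : P → P → Prop)
    (hne : ∃ T : P → P → Prop, OccursAsAF W T)
    (hmaxTS : IsTransferSystem AFmax)
    -- `AFmax` is the join of all elements of `AF(W)`: an upper bound …
    (hub : ∀ T : P → P → Prop, OccursAsAF W T → ∀ x y, T x y → AFmax x y)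
    -- … and the least such among transfer systems.
    (hlub : ∀ T' : P → P → Prop, IsTransferSystem T' →
      (∀ T : P → P → Prop, OccursAsAF W T → ∀ x y, T x y → T' x y) →
      ∀ x y, AFmax x y → T' x y) :
    ∀ T : P → P → Prop, IsTransferSystem T →
      (OccursAsAF W T ↔
        ((∀ x y, (∀ S : P → P → Prop, OccursAsAF W S → S x y) → T x y) ∧
          (∀ x y, T x y → AFmax x y))) := by
  intro T hT
  constructor
  · intro hTocc
    exact ⟨fun x y h => h T hTocc, hub T hTocc⟩
  · rintro ⟨hmin, hsub⟩
    obtain ⟨T0, AC0, F0, C0, hM0, hW0⟩ := hne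
    obtain ⟨hwfs10, hwfs20, hsub0, h23'⟩ := hM0
    have hACiff0 := hwfs10.2.1
    have hTiff0 := hwfs20.2.2
    have hAC0refl : ∀ x, AC0 x x := fun x => (hACiff0 x x).mpr (llp_refl _ x)
    have hT0refl : ∀ x, T0 x x := fun x => (hTiff0 x x).mpr (rlp_refl _ x)
    have hAC0W : ∀ x y, AC0 x y → W x y := fun x y h => (hW0 x y).mp ⟨y, h, hT0refl y⟩
    have hT0W : ∀ x y, T0 x y → W x y := fun x y h => (hW0 x y).mp ⟨x, hAC0refl x, h⟩
    have hWrefl : ∀ x, W x x := fun x => hAC0W x x (hAC0refl x)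
    have hAC0le : ∀ x y, AC0 x y → x ≤ y := fun x y h => ((hACiff0 x y).mp h).1
    have hT0le : ∀ x y, T0 x y → x ≤ y := fun x y h => ((hTiff0 x y).mp h).1
    have hWle : ∀ x y, W x y → x ≤ y := by
      intro x y h
      obtain ⟨m, h1, h2⟩ := (hW0 x y).mpr h
      exact (hAC0le _ _ h1).trans (hT0le _ _ h2)
    have hW23 : TwoOutOfThree W := by
      intro x y z hxy hyz
      obtain ⟨c1, c2, c3⟩ := h23' x y z hxy hyz
      exact ⟨fun h1 h2 => (hW0 _ _).mp (c1 ((hW0 _ _).mpr h1) ((hW0 _ _).mpr h2)),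
             fun h1 h2 => (hW0 _ _).mp (c2 ((hW0 _ _).mpr h1) ((hW0 _ _).mpr h2)),
             fun h1 h2 => (hW0 _ _).mp (c3 ((hW0 _ _).mpr h1) ((hW0 _ _).mpr h2))⟩
    have hWcomp : ∀ x y z, W x y → W y z → W x z := fun x y z h1 h2 =>
      (hW23 x y z (hWle _ _ h1) (hWle _ _ h2)).1 h1 h2
    have hWdec : ∀ x y z, x ≤ y → y ≤ z → W x z → W x y ∧ W y z := by
      intro x y z hxy hyz hw
      obtain ⟨m, hACm, hTm⟩ := (hW0 x z).mpr hw
      have hmz : m ≤ z := hT0le _ _ hTm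
      have hm'z : m ⊔ y ≤ z := sup_le hmz hyz
      have hACym' : AC0 y (m ⊔ y) :=
        (hACiff0 _ _).mpr (llp_pushout ((hACiff0 _ _).mp hACm) hxy)
      have hTmm' : T0 m (m ⊔ y) := by
        have h := rlp_pullback ((hTiff0 m z).mp hTm) hm'z
        rw [inf_sup_self] at h
        exact (hTiff0 _ _).mpr h
      have hWm'z : W (m ⊔ y) z :=
        (hW23 m (m ⊔ y) z le_sup_left hm'z).2.1 (hT0W _ _ hTmm') (hT0W _ _ hTm)
      have hWyz : W y z := hWcomp _ _ _ (hAC0W _ _ hACym') hWm'z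
      exact ⟨(hW23 x y z hxy hyz).2.2 hWyz hw, hWyz⟩
    -- T is contained in W
    have hOccStarW : ∀ x y, Relation.ReflTransGen (OccUnion W) x y → W x y := by
      intro x y h
      induction h with
      | refl => exact hWrefl x
      | tail _ h2 ih =>
        obtain ⟨S, hS, hs⟩ := h2
        exact hWcomp _ _ _ ih (occ_subW hS _ _ hs)
    have hT'le : ∀ x y, Relation.ReflTransGen (OccUnion W) x y → x ≤ y :=
      fun x y h => hWle _ _ (hOccStarW _ _ h)
    have hT'TS : IsTransferSystem (Relation.ReflTransGen (OccUnion W)) := by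
      refine ⟨fun x => .refl, fun x y z h1 h2 => h1.trans h2,
        fun x y h1 h2 => le_antisymm (hT'le _ _ h1) (hT'le _ _ h2), hT'le, ?_⟩
      intro x y z h
      induction h generalizing z with
      | refl =>
        intro hz
        have heq : x ⊓ z = z := inf_eq_right.mpr hz
        rw [heq]
      | @tail m y' h1 h2 ih =>
        intro hz
        obtain ⟨S, hS, hs⟩ := h2
        have hxm : x ≤ m := hT'le _ _ h1
        have ih' : Relation.ReflTransGen (OccUnion W) (x ⊓ (m ⊓ z)) (m ⊓ z) :=
          ih _ inf_le_left
        have heq : x ⊓ (m ⊓ z) = x ⊓ z := by rw [← inf_assoc, inf_eq_left.mpr hxm]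
        rw [heq] at ih'
        exact ih'.tail ⟨S, hS, occ_pullback hS hs hz⟩
    have hT_W : ∀ x y, T x y → W x y := fun x y h =>
      hOccStarW _ _ (hlub _ hT'TS
        (fun S hS u v hs => Relation.ReflTransGen.single ⟨S, hS, hs⟩) x y (hsub x y h))
    -- the generated acyclic cofibration class
    have hACstarW : ∀ a b, Relation.ReflTransGen (StepW W) a b → W a b := by
      intro a b h
      induction h with
      | refl => exact hWrefl a
      | tail _ h2 ih => exact hWcomp _ _ _ ih h2.1
    have hACstarPush : ∀ a b c, Relation.ReflTransGen (StepW W) a b → a ≤ c →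
        Relation.ReflTransGen (StepW W) c (b ⊔ c) := by
      intro a b c h hac
      induction h with
      | refl => rw [sup_eq_right.mpr hac]
      | @tail m b' h1 h2 ih =>
        obtain ⟨hw, S, hS, hL⟩ := h2
        have hpush : StepW W (m ⊔ c) (b' ⊔ (m ⊔ c)) :=
          ⟨occ_pushW hS hL hw le_sup_left, S, hS, llp_pushout hL le_sup_left⟩
        have heq : b' ⊔ (m ⊔ c) = b' ⊔ c := by
          rw [← sup_assoc, sup_eq_left.mpr hL.1]
        rw [heq] at hpush
        exact ih.tail hpush
    have claimA : ∀ a b, W a b →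
        ∃ y, Relation.ReflTransGen (StepW W) a y ∧ y ≤ b ∧
          ∀ S, OccursAsAF W S → S y b := by
      intro a b hwab
      set M : Set P := {m | Relation.ReflTransGen (StepW W) a m ∧ m ≤ b} with hM
      have haM : a ∈ M := ⟨.refl, hWle _ _ hwab⟩
      obtain ⟨y, hyM, hymax⟩ :=
        Set.Finite.exists_maximalFor id M (Set.toFinite M) ⟨a, haM⟩
      refine ⟨y, hyM.1, hyM.2, ?_⟩
      intro S hS
      obtain ⟨u, hLu, hub', hSu⟩ := occ_factor hS hyM.2
      have hay : a ≤ y := hWle _ _ (hACstarW _ _ hyM.1)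
      have hWyb : W y b := (hWdec a y b hay hyM.2 hwab).2
      have hWyu : W y u := (hWdec y u b hLu.1 hub' hWyb).1
      have huM : u ∈ M := ⟨hyM.1.tail ⟨hWyu, S, hS, hLu⟩, hub'⟩
      have hyu : y = u := by
        have := hymax huM (by simpa using hLu.1)
        exact le_antisymm hLu.1 (by simpa using this)
      rwa [hyu]
    have claimB : ∀ a b, LLP T a b → W a b → Relation.ReflTransGen (StepW W) a b := by
      intro a b hL hw
      obtain ⟨y, hstar, hyb, hall⟩ := claimA a b hw
      have hTyb : T y b := hmin y b (fun S hS => hall S hS)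
      have hby : b ≤ y := hL.2 y b hTyb (hWle _ _ (hACstarW _ _ hstar)) le_rfl
      have hyb' : y = b := le_antisymm hyb hby
      rwa [hyb'] at hstar
    -- assemble the model structure
    have hACcts : IsCotransferSystem (fun a b => LLP T a b ∧ W a b) := by
      refine ⟨fun x => ⟨llp_refl T x, hWrefl x⟩,
        fun x y z h1 h2 => ⟨llp_trans h1.1 h2.1, hWcomp _ _ _ h1.2 h2.2⟩,
        fun x y h1 h2 => le_antisymm h1.1.1 h2.1.1,
        fun x y h => h.1.1, ?_⟩
      intro a b c h hac
      exact ⟨llp_pushout h.1 hac,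
        hACstarW _ _ (hACstarPush _ _ _ (claimB _ _ h.1 h.2) hac)⟩
    have hwfsAC : IsWFS (fun a b => LLP T a b ∧ W a b)
        (RLP (fun a b => LLP T a b ∧ W a b)) := cts_wfs hACcts
    have hwfsT : IsWFS (LLP T) T := ts_wfs hT
    have hCompW : ∀ x y, Comp T (fun a b => LLP T a b ∧ W a b) x y ↔ W x y := by
      intro x z
      constructor
      · rintro ⟨m, hACm, hTm⟩
        exact hWcomp _ _ _ hACm.2 (hT_W _ _ hTm)
      · intro hw
        obtain ⟨m, hLm, hTm⟩ := hwfsT.1 x z (hWle _ _ hw)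
        exact ⟨m, ⟨hLm, (hWdec x m z hLm.1 (hT.2.2.2.1 _ _ hTm) hw).1⟩, hTm⟩
    have h23T : TwoOutOfThree (Comp T (fun a b => LLP T a b ∧ W a b)) := by
      intro x y z hxy hyz
      obtain ⟨c1, c2, c3⟩ := hW23 x y z hxy hyz
      exact ⟨fun h1 h2 => (hCompW _ _).mpr (c1 ((hCompW _ _).mp h1) ((hCompW _ _).mp h2)),
             fun h1 h2 => (hCompW _ _).mpr (c2 ((hCompW _ _).mp h1) ((hCompW _ _).mp h2)),
             fun h1 h2 => (hCompW _ _).mpr (c3 ((hCompW _ _).mp h1) ((hCompW _ _).mp h2))⟩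
    exact ⟨_, _, LLP T, ⟨hwfsAC, hwfsT, fun x y h => h.1, h23T⟩, hCompW⟩
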